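/- Assume (A_n)_{n≥0} is γ-periodic and fix x ∈ E_0. Let Y_n = (X_n, n mod γ) on E × ℤ/γℤ, killed on ∂ = {(z, k̄) : z ∈ A_k}, and let D be the communicating class of (x, 0̄); assume the restriction of Y to D is irreducible with spectral radius ρ_x > 0, strictly positive right Perron eigenvector ξ_x on D, and that every state reachable from (x, 0̄) by Y before hitting ∂ lies in D. Then for every n ≥ 1 and all y_1, …, y_n ∈ E, the limit ℚ_x(X_1 = y_1, …, X_n = y_n) := lim_{m→∞} P_x(X_1 = y_1, …, X_n = y_n | τ > m) exists and equals E_x[1_{X_1=y_1,…,X_n=y_n} 1_{τ>n} ξ_x(X_n, n̄)] / (ρ_x^n ξ_x(x, 0̄)); under ℚ_x, (X_n) is a time-inhomogeneous Markov chain whose transition probabilities are, for n ≥ 1, y ∈ E_{n−1}, z ∈ E_n: ℚ_x(X_n = z | X_{n−1} = y) = ξ_x(z, n̄) · P_y(X_1 = z) / (ρ_x · ξ_x(y, (n−1)‾)). -/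

import Mathlib

set_option linter.unusedSectionVars false
set_option linter.unusedVariables false
set_option maxHeartbeats 1000000


open Filter

variable {E : Type*}

/-- Dirac mass at `x`. -/
def dirac [DecidableEq E] (x : E) : E → ℝ := fun y => if y = x then 1 else 0

/-- `mdist P A μ n y = P_μ(X_n = y, τ > n)` for the Markov chain with transition matrix `P`
killed on the moving boundary `(A n)`, i.e. `τ = inf {n | X n ∈ A n}`. -/
noncomputable def mdist [Fintype E] [DecidableEq E] (P : E → E → ℝ) (A : ℕ → Finset E)
    (μ : E → ℝ) : ℕ → E → ℝ
  | 0 => fun y => if y ∈ A 0 then 0 else μ y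
  | n + 1 => fun y => if y ∈ A (n + 1) then 0 else ∑ x, mdist P A μ n x * P x y

/-- `n`-step sub-transition probabilities of a sub-Markov kernel `Q` on a finite set `S`. -/
noncomputable def kpow {S : Type*} [Fintype S] [DecidableEq S] (Q : S → S → ℝ) :
    ℕ → S → S → ℝ
  | 0 => fun a b => if a = b then 1 else 0
  | n + 1 => fun a b => ∑ c, kpow Q n a c * Q c b

/-- The sub-transition matrix of the space-time chain `Y_n = (X_n, n mod γ)` on
`E × ℤ/γℤ`, killed on `∂ = {(z, k̄) : z ∈ A k}`. -/
def QY [Fintype E] [DecidableEq E] (P : E → E → ℝ) (A : ℕ → Finset E) (γ : ℕ) :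
    (E × ZMod γ) → (E × ZMod γ) → ℝ :=
  fun a b =>
    if a.1 ∉ A a.2.val ∧ b.1 ∉ A b.2.val ∧ b.2 = a.2 + 1 then P a.1 b.1 else 0

section AUX
variable {S : Type*} [Fintype S] [DecidableEq S] {Q : S → S → ℝ}

lemma kpow_nonneg (hQ : ∀ a b, 0 ≤ Q a b) (m : ℕ) (a b : S) : 0 ≤ kpow Q m a b := by
  induction m generalizing a b with
  | zero => simp only [kpow]; positivity
  | succ n ih =>
    simp only [kpow]
    exact Finset.sum_nonneg fun c _ => mul_nonneg (ih a c) (hQ c b)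

lemma kpow_zero (a b : S) : kpow Q 0 a b = if a = b then 1 else 0 := rfl

lemma kpow_succ (m : ℕ) (a b : S) : kpow Q (m + 1) a b = ∑ c, kpow Q m a c * Q c b := rfl

lemma kpow_add (s t : ℕ) (a b : S) :
    kpow Q (s + t) a b = ∑ c, kpow Q s a c * kpow Q t c b := by
  induction t generalizing b with
  | zero =>
    simp only [Nat.add_zero, kpow_zero]
    rw [Finset.sum_congr rfl (fun c _ => by rw [mul_ite, mul_one, mul_zero]),
      Finset.sum_ite_eq' Finset.univ b (kpow Q s a), if_pos (Finset.mem_univ b)]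
  | succ t ih =>
    show kpow Q (s + t + 1) a b = _
    simp only [kpow_succ, ih, Finset.sum_mul, Finset.mul_sum, mul_assoc]
    rw [Finset.sum_comm]

lemma kpow_pos_trans (hQ : ∀ a b, 0 ≤ Q a b) {s t : ℕ} {a b c : S}
    (h1 : 0 < kpow Q s a b) (h2 : 0 < kpow Q t b c) : 0 < kpow Q (s + t) a c := by
  rw [kpow_add]
  have : 0 < kpow Q s a b * kpow Q t b c := mul_pos h1 h2
  calc (0:ℝ) < kpow Q s a b * kpow Q t b c := this
    _ ≤ ∑ v, kpow Q s a v * kpow Q t v c :=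
      Finset.single_le_sum (f := fun v => kpow Q s a v * kpow Q t v c)
        (fun v _ => mul_nonneg (kpow_nonneg hQ _ _ _) (kpow_nonneg hQ _ _ _))
        (Finset.mem_univ b)

lemma kpow_step_pos (hQ : ∀ a b, 0 ≤ Q a b) {m : ℕ} {a b c : S}
    (h1 : 0 < kpow Q m a b) (h2 : 0 < Q b c) : 0 < kpow Q (m + 1) a c := by
  rw [kpow_succ]
  calc (0:ℝ) < kpow Q m a b * Q b c := mul_pos h1 h2
    _ ≤ _ := Finset.single_le_sum (f := fun v => kpow Q m a v * Q v c)
      (fun v _ => mul_nonneg (kpow_nonneg hQ _ _ _) (hQ _ _)) (Finset.mem_univ b)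

-- ## chunk 2 : QY and D lemmas
section QYD

variable {E : Type*} [Fintype E] [DecidableEq E]
  (P : E → E → ℝ) (A : ℕ → Finset E) (γ : ℕ) [NeZero γ]

lemma A_mod (hper : ∀ n : ℕ, A (n + γ) = A n) (n : ℕ) : A (n % γ) = A n := by
  conv_rhs => rw [← Nat.mod_add_div n γ]
  generalize n / γ = k
  induction k with
  | zero => simp
  | succ k ih => rw [Nat.mul_succ, ← Nat.add_assoc, hper, ih]

lemma QY_nonneg (hPnn : ∀ x y, 0 ≤ P x y) (a b : E × ZMod γ) : 0 ≤ QY P A γ a b := by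
  unfold QY; split
  · exact hPnn _ _
  · exact le_refl 0

lemma QY_apply_nat (hper : ∀ n : ℕ, A (n + γ) = A n) (u v : E) (j : ℕ) :
    QY P A γ (u, (j : ZMod γ)) (v, ((j+1 : ℕ) : ZMod γ)) =
      if u ∉ A j ∧ v ∉ A (j+1) then P u v else 0 := by
  unfold QY
  have h1 : ((j : ZMod γ)).val = j % γ := ZMod.val_natCast γ j
  have h2 : (((j+1:ℕ) : ZMod γ)).val = (j+1) % γ := ZMod.val_natCast γ (j+1)
  have h3 : ((j+1 : ℕ) : ZMod γ) = (j : ZMod γ) + 1 := by push_cast; ring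
  have hcond : (u ∉ A ((j : ZMod γ)).val ∧ v ∉ A ((((j+1:ℕ)) : ZMod γ)).val ∧
      ((j+1:ℕ) : ZMod γ) = (j : ZMod γ) + 1) ↔ (u ∉ A j ∧ v ∉ A (j+1)) := by
    rw [h1, h2, A_mod A γ hper, A_mod A γ hper]
    simp [h3]
  exact if_congr hcond rfl rfl

lemma QY_time {a b : E × ZMod γ} (h : QY P A γ a b ≠ 0) : b.2 = a.2 + 1 := by
  by_contra hc
  apply h
  unfold QY
  rw [if_neg (by tauto)]

lemma kpow_QY_time {j : ℕ} {a b : E × ZMod γ} (h : kpow (QY P A γ) j a b ≠ 0) :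
    b.2 = a.2 + (j : ZMod γ) := by
  induction j generalizing b with
  | zero =>
    rw [kpow_zero] at h
    have : a = b := by by_contra hc; rw [if_neg hc] at h; exact h rfl
    simp [← this]
  | succ j ih =>
    rw [kpow_succ] at h
    obtain ⟨c, -, hc⟩ := Finset.exists_ne_zero_of_sum_ne_zero h
    have h1 : kpow (QY P A γ) j a c ≠ 0 := fun h0 => hc (by rw [h0, zero_mul])
    have h2 : QY P A γ c b ≠ 0 := fun h0 => hc (by rw [h0, mul_zero])
    rw [QY_time P A γ h2, ih h1]
    push_cast
    ring

lemma QY_boundary {j : ℕ} {b : E × ZMod γ}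
    (hb : b.1 ∈ A b.2.val) (a : E × ZMod γ) (hj : j ≠ 0) : kpow (QY P A γ) j a b = 0 := by
  obtain ⟨j, rfl⟩ := Nat.exists_eq_succ_of_ne_zero hj
  rw [kpow_succ]
  apply Finset.sum_eq_zero
  intro c _
  have : QY P A γ c b = 0 := by unfold QY; rw [if_neg (by tauto)]
  rw [this, mul_zero]

end QYD

-- ## chunk 3 : setup structure, phat
lemma kpow_one {S : Type*} [Fintype S] [DecidableEq S] (Q : S → S → ℝ) (a b : S) :
    kpow Q 1 a b = Q a b := by
  show ∑ c, kpow Q 0 a c * Q c b = Q a b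
  simp only [kpow_zero, ite_mul, one_mul, zero_mul]
  rw [Finset.sum_ite_eq Finset.univ a (fun c => Q c b), if_pos (Finset.mem_univ a)]

structure GoodSetup {E : Type*} [Fintype E] [DecidableEq E] (P : E → E → ℝ)
    (A : ℕ → Finset E) (γ : ℕ) [NeZero γ] (x : E) (D : Finset (E × ZMod γ))
    (ρ : ℝ) (ξ : E × ZMod γ → ℝ) : Prop where
  hPnn : ∀ a b, 0 ≤ P a b
  hper : ∀ n, A (n + γ) = A n
  hxD : (x, (0 : ZMod γ)) ∈ D
  hcomm : ∀ z ∈ D, (∃ n, 0 < kpow (QY P A γ) n (x, (0 : ZMod γ)) z) ∧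
      ∃ m, 0 < kpow (QY P A γ) m z (x, (0 : ZMod γ))
  hreach : ∀ z, (∃ n, 0 < kpow (QY P A γ) n (x, (0 : ZMod γ)) z) → z ∈ D
  hρ : 0 < ρ
  hξpos : ∀ z ∈ D, 0 < ξ z
  hξeig : ∀ z ∈ D, ∑ w ∈ D, QY P A γ z w * ξ w = ρ * ξ z

noncomputable def phat {E : Type*} [Fintype E] [DecidableEq E] (P : E → E → ℝ)
    (A : ℕ → Finset E) (γ : ℕ) [NeZero γ] (D : Finset (E × ZMod γ))
    (ρ : ℝ) (ξ : E × ZMod γ → ℝ) : (E × ZMod γ) → (E × ZMod γ) → ℝ :=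
  fun z w => if z ∈ D then QY P A γ z w * ξ w / (ρ * ξ z) else 0

noncomputable def fxi {E : Type*} {γ : ℕ} (D : Finset (E × ZMod γ)) [DecidableEq (E × ZMod γ)]
    (ξ : E × ZMod γ → ℝ) : E × ZMod γ → ℝ :=
  fun w => if w ∈ D then (ξ w)⁻¹ else 0

noncomputable def gfun {E : Type*} [Fintype E] [DecidableEq E] (P : E → E → ℝ)
    (A : ℕ → Finset E) (γ : ℕ) [NeZero γ] (D : Finset (E × ZMod γ))
    (ρ : ℝ) (ξ : E × ZMod γ → ℝ) (m : ℕ) (z : E × ZMod γ) : ℝ :=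
  ∑ w, kpow (phat P A γ D ρ ξ) m z w * fxi D ξ w

section Main

variable {E : Type*} [Fintype E] [DecidableEq E] {P : E → E → ℝ} {A : ℕ → Finset E}
  {γ : ℕ} [NeZero γ] {x : E} {D : Finset (E × ZMod γ)} {ρ : ℝ} {ξ : E × ZMod γ → ℝ}
  (H : GoodSetup P A γ x D ρ ξ)

local notation "Q" => QY P A γ
local notation "z₀" => (x, (0 : ZMod γ))
local notation "ph" => phat P A γ D ρ ξ

include H

lemma hQnn : ∀ a b, 0 ≤ Q a b := QY_nonneg P A γ H.hPnn

lemma kpowQ_nonneg (m : ℕ) (a b : E × ZMod γ) : 0 ≤ kpow Q m a b :=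
  kpow_nonneg (hQnn H) m a b

lemma mem_D_of_kpow {m : ℕ} {w : E × ZMod γ} (h : 0 < kpow Q m z₀ w) : w ∈ D :=
  H.hreach w ⟨m, h⟩

lemma D_trans {z w : E × ZMod γ} (hz : z ∈ D) {m : ℕ} (h : kpow Q m z w ≠ 0) : w ∈ D := by
  obtain ⟨n, hn⟩ := (H.hcomm z hz).1
  exact mem_D_of_kpow H (kpow_pos_trans (hQnn H) hn (lt_of_le_of_ne (kpowQ_nonneg H m z w) (Ne.symm h)))

lemma Q_off {z w : E × ZMod γ} (hz : z ∈ D) (hw : w ∉ D) : Q z w = 0 := by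
  by_contra h
  exact hw (D_trans H hz (m := 1) (by rwa [kpow_one]))

lemma kpowQ_off {z w : E × ZMod γ} (hz : z ∈ D) (hw : w ∉ D) (m : ℕ) :
    kpow Q m z w = 0 := by
  by_contra h
  exact hw (D_trans H hz h)

lemma phat_nonneg (z w : E × ZMod γ) : 0 ≤ ph z w := by
  unfold phat
  split
  · rename_i hz
    by_cases hw : w ∈ D
    · have h1 := H.hξpos w hw
      have h2 := H.hξpos z hz
      have h3 := H.hρ
      have h4 := hQnn H z w
      positivity
    · rw [Q_off H hz hw, zero_mul, zero_div]
  · exact le_refl 0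

lemma phat_off (z w : E × ZMod γ) (h : ph z w ≠ 0) : w ∈ D := by
  unfold phat at h
  by_contra hw
  apply h
  split
  · rename_i hz; rw [Q_off H hz hw, zero_mul, zero_div]
  · rfl

lemma phat_row {z : E × ZMod γ} (hz : z ∈ D) : ∑ w, ph z w = 1 := by
  unfold phat
  simp only [if_pos hz]
  rw [← Finset.sum_div]
  rw [show ∑ w, Q z w * ξ w = ∑ w ∈ D, Q z w * ξ w from
    (Finset.sum_subset (Finset.subset_univ D) (fun w _ hw => by
      rw [Q_off H hz hw, zero_mul])).symm]
  rw [H.hξeig z hz]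
  exact div_self (by
    have h1 := H.hρ
    have h2 := H.hξpos z hz
    positivity)

lemma kpow_phat_eq {z : E × ZMod γ} (hz : z ∈ D) (m : ℕ) (w : E × ZMod γ) :
    kpow ph m z w = kpow Q m z w * ξ w / (ρ ^ m * ξ z) := by
  have hξz : ξ z ≠ 0 := ne_of_gt (H.hξpos z hz)
  have hρ0 : (ρ : ℝ) ≠ 0 := ne_of_gt H.hρ
  induction m generalizing w with
  | zero =>
    rw [kpow_zero, kpow_zero]
    by_cases h : z = w
    · subst h
      rw [if_pos rfl]
      field_simp
    · rw [if_neg h]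
      simp
  | succ m ih =>
    rw [kpow_succ, kpow_succ]
    rw [Finset.sum_mul, Finset.sum_div]
    apply Finset.sum_congr rfl
    intro v _
    by_cases hv : v ∈ D
    · have hξv : ξ v ≠ 0 := ne_of_gt (H.hξpos v hv)
      rw [ih, show ph v w = Q v w * ξ w / (ρ * ξ v) from if_pos hv]
      field_simp
      ring
    · rw [ih, kpowQ_off H hz hv, show ph v w = 0 from if_neg hv]
      simp

lemma kpow_phat_nonneg (m : ℕ) (z w : E × ZMod γ) : 0 ≤ kpow ph m z w :=
  kpow_nonneg (phat_nonneg H) m z w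

lemma kpow_phat_target {z : E × ZMod γ} (hz : z ∈ D) {m : ℕ} {w : E × ZMod γ}
    (h : kpow ph m z w ≠ 0) : w ∈ D := by
  by_contra hw
  exact h (by rw [kpow_phat_eq H hz, kpowQ_off H hz hw, zero_mul, zero_div])

lemma kpow_phat_row {z : E × ZMod γ} (hz : z ∈ D) (m : ℕ) : ∑ w, kpow ph m z w = 1 := by
  induction m with
  | zero =>
    simp only [kpow_zero]
    rw [Finset.sum_ite_eq Finset.univ z (fun _ => (1:ℝ)), if_pos (Finset.mem_univ z)]
  | succ m ih =>
    simp only [kpow_succ]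
    rw [Finset.sum_comm]
    have : ∀ v ∈ Finset.univ, kpow ph m z v * (∑ w, ph v w) = kpow ph m z v := by
      intro v _
      by_cases hv : v ∈ D
      · rw [phat_row H hv, mul_one]
      · have h0 : kpow ph m z v = 0 := by
          by_contra h
          exact hv (kpow_phat_target H hz h)
        rw [h0, zero_mul]
    calc ∑ v, ∑ w, kpow ph m z v * ph v w
        = ∑ v, kpow ph m z v * (∑ w, ph v w) := by
          exact Finset.sum_congr rfl fun v _ => (Finset.mul_sum _ _ _).symm
      _ = ∑ v, kpow ph m z v := Finset.sum_congr rfl this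
      _ = 1 := ih

lemma gfun_split (a b : ℕ) (z : E × ZMod γ) :
    gfun P A γ D ρ ξ (a + b) z = ∑ v, kpow ph a z v * gfun P A γ D ρ ξ b v := by
  unfold gfun
  simp only [kpow_add a b, Finset.sum_mul, Finset.mul_sum, mul_assoc]
  rw [Finset.sum_comm]

lemma Fsum_eq {z : E × ZMod γ} (hz : z ∈ D) (m : ℕ) :
    ∑ w, kpow Q m z w = ρ ^ m * ξ z * gfun P A γ D ρ ξ m z := by
  unfold gfun fxi
  rw [Finset.mul_sum]
  apply Finset.sum_congr rfl
  intro w _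
  by_cases hw : w ∈ D
  · rw [kpow_phat_eq H hz, if_pos hw]
    have hξz : ξ z ≠ 0 := ne_of_gt (H.hξpos z hz)
    have hξw : ξ w ≠ 0 := ne_of_gt (H.hξpos w hw)
    have hρ0 : (ρ:ℝ) ≠ 0 := ne_of_gt H.hρ
    field_simp
  · rw [kpowQ_off H hz hw, if_neg hw, mul_zero, mul_zero]

lemma gfun_bounds : ∃ c₁ c₂ : ℝ, 0 < c₁ ∧ 0 < c₂ ∧
    ∀ m : ℕ, ∀ z ∈ D, c₁ ≤ gfun P A γ D ρ ξ m z ∧ gfun P A γ D ρ ξ m z ≤ c₂ := by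
  have hne : D.Nonempty := ⟨z₀, H.hxD⟩
  set Mx := D.sup' hne ξ with hMx
  set mn := D.inf' hne ξ with hmn
  have hMxpos : 0 < Mx := lt_of_lt_of_le (H.hξpos _ H.hxD) (Finset.le_sup' ξ H.hxD)
  have hmnpos : 0 < mn := by
    obtain ⟨w, hw, hweq⟩ := Finset.exists_mem_eq_inf' hne ξ
    rw [hmn, hweq]; exact H.hξpos w hw
  refine ⟨Mx⁻¹, mn⁻¹, by positivity, by positivity, ?_⟩
  intro m z hz
  have hmass : ∑ w, kpow ph m z w = 1 := kpow_phat_row H hz m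
  constructor
  · calc Mx⁻¹ = Mx⁻¹ * ∑ w, kpow ph m z w := by rw [hmass, mul_one]
      _ = ∑ w, kpow ph m z w * Mx⁻¹ := by rw [Finset.mul_sum]; exact Finset.sum_congr rfl fun w _ => mul_comm _ _
      _ ≤ gfun P A γ D ρ ξ m z := by
          apply Finset.sum_le_sum
          intro w _
          unfold fxi
          by_cases hw : w ∈ D
          · rw [if_pos hw]
            apply mul_le_mul_of_nonneg_left _ (kpow_phat_nonneg H m z w)
            exact inv_anti₀ (H.hξpos w hw) (Finset.le_sup' ξ hw)
          · have h0 : kpow ph m z w = 0 := by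
              by_contra h; exact hw (kpow_phat_target H hz h)
            rw [h0, zero_mul, zero_mul]
  · calc gfun P A γ D ρ ξ m z ≤ ∑ w, kpow ph m z w * mn⁻¹ := by
          apply Finset.sum_le_sum
          intro w _
          unfold fxi
          by_cases hw : w ∈ D
          · rw [if_pos hw]
            apply mul_le_mul_of_nonneg_left _ (kpow_phat_nonneg H m z w)
            exact inv_anti₀ hmnpos (Finset.inf'_le ξ hw)
          · have h0 : kpow ph m z w = 0 := by
              by_contra h; exact hw (kpow_phat_target H hz h)
            rw [h0, zero_mul, zero_mul]
      _ = mn⁻¹ := by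
          rw [← Finset.sum_mul, hmass, one_mul]

end Main

-- ## chunk 5 : merging and contraction

def SamePhase {E : Type*} [Fintype E] [DecidableEq E] (P : E → E → ℝ) (A : ℕ → Finset E)
    (γ : ℕ) [NeZero γ] (x : E) (a b : E × ZMod γ) : Prop :=
  ∃ j, 0 < kpow (QY P A γ) j (x, (0 : ZMod γ)) a ∧ 0 < kpow (QY P A γ) j (x, (0 : ZMod γ)) b

section Main2

variable {E : Type*} [Fintype E] [DecidableEq E] {P : E → E → ℝ} {A : ℕ → Finset E}
  {γ : ℕ} [NeZero γ] {x : E} {D : Finset (E × ZMod γ)} {ρ : ℝ} {ξ : E × ZMod γ → ℝ}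
  (H : GoodSetup P A γ x D ρ ξ)

local notation "Q" => QY P A γ
local notation "z₀" => (x, (0 : ZMod γ))
local notation "ph" => phat P A γ D ρ ξ
local notation "SP" => SamePhase P A γ x

include H

lemma samePhase_D {a b : E × ZMod γ} (h : SP a b) : a ∈ D ∧ b ∈ D := by
  obtain ⟨j, h1, h2⟩ := h
  exact ⟨mem_D_of_kpow H h1, mem_D_of_kpow H h2⟩

lemma kpow_phat_pos_of_Q {a w : E × ZMod γ} (ha : a ∈ D) (hw : w ∈ D) {k : ℕ}
    (h : 0 < kpow Q k a w) : 0 < kpow ph k a w := by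
  rw [kpow_phat_eq H ha]
  have h1 := H.hξpos a ha
  have h2 := H.hξpos w hw
  have h3 := H.hρ
  positivity

lemma merge_exists {a b : E × ZMod γ} (hab : SP a b) :
    ∃ k w, 0 < kpow ph k a w ∧ 0 < kpow ph k b w := by
  obtain ⟨j, hja, hjb⟩ := hab
  have ha : a ∈ D := mem_D_of_kpow H hja
  have hb : b ∈ D := mem_D_of_kpow H hjb
  obtain ⟨ma, hma⟩ := (H.hcomm a ha).2
  obtain ⟨mb, hmb⟩ := (H.hcomm b hb).2
  have h1 : 0 < kpow Q (ma + (j + (mb + j))) a a :=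
    kpow_pos_trans (hQnn H) hma (kpow_pos_trans (hQnn H) hjb
      (kpow_pos_trans (hQnn H) hmb hja))
  have h2 : 0 < kpow Q (mb + (j + (ma + j))) b a :=
    kpow_pos_trans (hQnn H) hmb (kpow_pos_trans (hQnn H) hja
      (kpow_pos_trans (hQnn H) hma hja))
  have e : mb + (j + (ma + j)) = ma + (j + (mb + j)) := by omega
  rw [e] at h2
  exact ⟨ma + (j + (mb + j)), a, kpow_phat_pos_of_Q H ha ha h1, kpow_phat_pos_of_Q H hb ha h2⟩

lemma merge_mono {a b : E × ZMod γ} (ha : a ∈ D) (hb : b ∈ D) {k : ℕ}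
    (h : ∃ w, 0 < kpow ph k a w ∧ 0 < kpow ph k b w) :
    ∃ w, 0 < kpow ph (k + 1) a w ∧ 0 < kpow ph (k + 1) b w := by
  obtain ⟨w, h1, h2⟩ := h
  have hw : w ∈ D := kpow_phat_target H ha (ne_of_gt h1)
  have : ∃ w', ph w w' ≠ 0 := by
    by_contra hc
    push_neg at hc
    have : ∑ w', ph w w' = 0 := Finset.sum_eq_zero fun w' _ => hc w'
    rw [phat_row H hw] at this
    norm_num at this
  obtain ⟨w', hw'⟩ := this
  have hw'pos : 0 < ph w w' := lt_of_le_of_ne (phat_nonneg H w w') (Ne.symm hw')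
  exact ⟨w', kpow_step_pos (phat_nonneg H) h1 hw'pos, kpow_step_pos (phat_nonneg H) h2 hw'pos⟩

lemma merge_uniform : ∃ (K : ℕ) (ε : ℝ), 0 < K ∧ 0 < ε ∧ ε ≤ 1/2 ∧
    ∀ a b, SP a b → ∃ w, ε ≤ kpow ph K a w ∧ ε ≤ kpow ph K b w := by
  classical
  haveI : Nonempty (E × ZMod γ) := ⟨z₀⟩
  set T : Finset ((E × ZMod γ) × (E × ZMod γ)) :=
    Finset.univ.filter (fun p => SamePhase P A γ x p.1 p.2) with hT
  have hmemT : ∀ p, p ∈ T ↔ SP p.1 p.2 := by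
    intro p; rw [hT, Finset.mem_filter]; simp
  have hEx : ∀ p ∈ T, ∃ k, ∃ w, 0 < kpow ph k p.1 w ∧ 0 < kpow ph k p.2 w := by
    intro p hp
    exact merge_exists H ((hmemT p).1 hp)
  choose! kk hkk using hEx
  set K := T.sup kk + 1 with hK
  have hKmerge : ∀ p ∈ T, ∃ w, 0 < kpow ph K p.1 w ∧ 0 < kpow ph K p.2 w := by
    intro p hp
    have hsp := (hmemT p).1 hp
    have hD := samePhase_D H hsp
    have hle : kk p ≤ K := le_trans (Finset.le_sup hp) (Nat.le_succ _)
    have : ∀ k, kk p ≤ k → ∃ w, 0 < kpow ph k p.1 w ∧ 0 < kpow ph k p.2 w := by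
      intro k hk
      induction k, hk using Nat.le_induction with
      | base => exact hkk p hp
      | succ k hk ih => exact merge_mono H hD.1 hD.2 ih
    exact this K hle
  set val : ((E × ZMod γ) × (E × ZMod γ)) → ℝ :=
    fun p => Finset.univ.sup' Finset.univ_nonempty
      (fun w => min (kpow ph K p.1 w) (kpow ph K p.2 w)) with hval
  have hvalpos : ∀ p ∈ T, 0 < val p := by
    intro p hp
    obtain ⟨w, h1, h2⟩ := hKmerge p hp
    exact lt_of_lt_of_le (lt_min h1 h2)
      (Finset.le_sup' (fun w => min (kpow ph K p.1 w) (kpow ph K p.2 w)) (Finset.mem_univ w))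
  have hTne : T.Nonempty := by
    refine ⟨(z₀, z₀), (hmemT _).2 ⟨0, ?_, ?_⟩⟩ <;>
      · rw [kpow_zero, if_pos rfl]; norm_num
  set ε := min (T.inf' hTne val) (1/2) with hε
  refine ⟨K, ε, Nat.succ_pos _, ?_, min_le_right _ _, ?_⟩
  · apply lt_min
    · rw [Finset.lt_inf'_iff]
      exact hvalpos
    · norm_num
  · intro a b hab
    have hp : (a, b) ∈ T := (hmemT _).2 hab
    have h1 : ε ≤ val (a, b) := le_trans (min_le_left _ _) (Finset.inf'_le val hp)
    obtain ⟨w, -, hweq⟩ := Finset.exists_mem_eq_sup' (Finset.univ_nonempty)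
      (fun w => min (kpow ph K a w) (kpow ph K b w))
    rw [hval] at h1
    simp only at h1 hweq
    rw [hweq] at h1
    exact ⟨w, le_trans h1 (min_le_left _ _), le_trans h1 (min_le_right _ _)⟩

lemma abs_sub_eq (u v : ℝ) : |u - v| = u + v - 2 * min u v := by
  rcases le_total u v with h | h
  · rw [min_eq_left h, abs_of_nonpos (sub_nonpos.2 h)]; ring
  · rw [min_eq_right h, abs_of_nonneg (sub_nonneg.2 h)]; ring

lemma tv_pair {K : ℕ} {ε : ℝ}
    (hme : ∀ a b, SP a b → ∃ w, ε ≤ kpow ph K a w ∧ ε ≤ kpow ph K b w)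
    {a b : E × ZMod γ} (hab : SP a b) :
    ∑ w, |kpow ph K a w - kpow ph K b w| ≤ 2 * (1 - ε) := by
  obtain ⟨w₀, h1, h2⟩ := hme a b hab
  obtain ⟨ha, hb⟩ := samePhase_D H hab
  have key : ∑ w, |kpow ph K a w - kpow ph K b w|
      = 2 - 2 * ∑ w, min (kpow ph K a w) (kpow ph K b w) := by
    have : ∀ w, |kpow ph K a w - kpow ph K b w|
        = kpow ph K a w + kpow ph K b w - 2 * min (kpow ph K a w) (kpow ph K b w) :=
      fun w => abs_sub_eq H _ _
    rw [Finset.sum_congr rfl (fun w _ => this w)]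
    rw [Finset.sum_sub_distrib, Finset.sum_add_distrib, kpow_phat_row H ha,
      kpow_phat_row H hb, ← Finset.mul_sum]
    ring
  rw [key]
  have hmin : ε ≤ ∑ w, min (kpow ph K a w) (kpow ph K b w) := by
    calc ε ≤ min (kpow ph K a w₀) (kpow ph K b w₀) := le_min h1 h2
      _ ≤ _ := Finset.single_le_sum
          (f := fun w => min (kpow ph K a w) (kpow ph K b w))
          (fun w _ => le_min (kpow_phat_nonneg H K a w) (kpow_phat_nonneg H K b w))
          (Finset.mem_univ w₀)
  linarith

lemma tv_contract {K : ℕ} {ε : ℝ}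
    (hme : ∀ a b, SP a b → ∃ w, ε ≤ kpow ph K a w ∧ ε ≤ kpow ph K b w)
    (θ : E × ZMod γ → ℝ) (hsum : ∑ v, θ v = 0)
    (hsupp : ∀ a b, θ a ≠ 0 → θ b ≠ 0 → SP a b) :
    ∑ w, |∑ v, θ v * kpow ph K v w| ≤ (1 - ε) * ∑ v, |θ v| := by
  classical
  set θp : E × ZMod γ → ℝ := fun v => max (θ v) 0 with hθp
  set θm : E × ZMod γ → ℝ := fun v => max (-θ v) 0 with hθm
  have hdec : ∀ v, θ v = θp v - θm v := by
    intro v; rw [hθp, hθm]; simp only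
    rcases le_total (θ v) 0 with h | h
    · rw [max_eq_right h, max_eq_left (by linarith)]; ring
    · rw [max_eq_left h, max_eq_right (by linarith)]; ring
  have habs : ∀ v, |θ v| = θp v + θm v := by
    intro v; rw [hθp, hθm]; simp only
    rcases le_total (θ v) 0 with h | h
    · rw [max_eq_right h, max_eq_left (by linarith), abs_of_nonpos h]; ring
    · rw [max_eq_left h, max_eq_right (by linarith), abs_of_nonneg h]; ring
  have hθpnn : ∀ v, 0 ≤ θp v := fun v => le_max_right _ _
  have hθmnn : ∀ v, 0 ≤ θm v := fun v => le_max_right _ _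
  set c := ∑ v, θp v with hc
  have hcm : ∑ v, θm v = c := by
    have : ∑ v, (θp v - θm v) = 0 := by
      rw [← hsum]; exact Finset.sum_congr rfl fun v _ => (hdec v).symm
    rw [Finset.sum_sub_distrib] at this
    linarith
  have hcnn : 0 ≤ c := Finset.sum_nonneg fun v _ => hθpnn v
  rcases eq_or_lt_of_le hcnn with hc0 | hcpos
  · -- c = 0 : θ is identically zero
    have hz : ∀ v, θ v = 0 := by
      intro v
      have h1 : θp v = 0 := by
        have := Finset.sum_eq_zero_iff_of_nonneg (fun v _ => hθpnn v) |>.1 hc0.symm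
        exact this v (Finset.mem_univ v)
      have h2 : θm v = 0 := by
        have := Finset.sum_eq_zero_iff_of_nonneg (fun v _ => hθmnn v) |>.1 (hcm.trans hc0.symm)
        exact this v (Finset.mem_univ v)
      rw [hdec v, h1, h2]; ring
    have h1 : ∑ w, |∑ v, θ v * kpow ph K v w| = 0 := by
      apply Finset.sum_eq_zero
      intro w _
      rw [Finset.sum_eq_zero fun v _ => by rw [hz v, zero_mul], abs_zero]
    have h2 : ∑ v, |θ v| = 0 := Finset.sum_eq_zero fun v _ => by rw [hz v, abs_zero]
    rw [h1, h2, mul_zero]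
  · -- c > 0
    have hident : ∀ w, ∑ v, θ v * kpow ph K v w
        = c⁻¹ * ∑ a, ∑ b, θp a * θm b * (kpow ph K a w - kpow ph K b w) := by
      intro w
      have expand : ∑ a, ∑ b, θp a * θm b * (kpow ph K a w - kpow ph K b w)
          = (∑ a, θp a * kpow ph K a w) * (∑ b, θm b)
            - (∑ a, θp a) * (∑ b, θm b * kpow ph K b w) := by
        rw [Finset.sum_mul, Finset.sum_mul]
        rw [← Finset.sum_sub_distrib]
        apply Finset.sum_congr rfl
        intro a _
        rw [Finset.mul_sum, Finset.mul_sum, ← Finset.sum_sub_distrib]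
        apply Finset.sum_congr rfl
        intro b _
        ring
      rw [expand, hcm, ← hc]
      have : ∑ v, θ v * kpow ph K v w
          = (∑ a, θp a * kpow ph K a w) - (∑ b, θm b * kpow ph K b w) := by
        rw [← Finset.sum_sub_distrib]
        apply Finset.sum_congr rfl
        intro v _
        rw [hdec v]; ring
      rw [this]
      field_simp
    calc ∑ w, |∑ v, θ v * kpow ph K v w|
        = ∑ w, |c⁻¹ * ∑ a, ∑ b, θp a * θm b * (kpow ph K a w - kpow ph K b w)| := by
          exact Finset.sum_congr rfl fun w _ => by rw [hident w]
      _ ≤ ∑ w, c⁻¹ * ∑ a, ∑ b, θp a * θm b * |kpow ph K a w - kpow ph K b w| := by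
          apply Finset.sum_le_sum
          intro w _
          rw [abs_mul, abs_of_nonneg (inv_nonneg.2 hcnn)]
          apply mul_le_mul_of_nonneg_left _ (inv_nonneg.2 hcnn)
          calc |∑ a, ∑ b, θp a * θm b * (kpow ph K a w - kpow ph K b w)|
              ≤ ∑ a, |∑ b, θp a * θm b * (kpow ph K a w - kpow ph K b w)| :=
                Finset.abs_sum_le_sum_abs _ _
            _ ≤ ∑ a, ∑ b, θp a * θm b * |kpow ph K a w - kpow ph K b w| := by
                apply Finset.sum_le_sum
                intro a _
                calc |∑ b, θp a * θm b * (kpow ph K a w - kpow ph K b w)|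
                    ≤ ∑ b, |θp a * θm b * (kpow ph K a w - kpow ph K b w)| :=
                      Finset.abs_sum_le_sum_abs _ _
                  _ = ∑ b, θp a * θm b * |kpow ph K a w - kpow ph K b w| := by
                      apply Finset.sum_congr rfl
                      intro b _
                      rw [abs_mul, abs_mul, abs_of_nonneg (hθpnn a), abs_of_nonneg (hθmnn b)]
      _ = c⁻¹ * ∑ a, ∑ b, θp a * θm b * (∑ w, |kpow ph K a w - kpow ph K b w|) := by
          rw [← Finset.mul_sum]
          congr 1
          rw [Finset.sum_comm]
          apply Finset.sum_congr rfl
          intro a _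
          rw [Finset.sum_comm]
          apply Finset.sum_congr rfl
          intro b _
          rw [Finset.mul_sum]
      _ ≤ c⁻¹ * ∑ a, ∑ b, θp a * θm b * (2 * (1 - ε)) := by
          apply mul_le_mul_of_nonneg_left _ (inv_nonneg.2 hcnn)
          apply Finset.sum_le_sum
          intro a _
          apply Finset.sum_le_sum
          intro b _
          rcases eq_or_lt_of_le (mul_nonneg (hθpnn a) (hθmnn b)) with h0 | h0
          · rw [← h0, zero_mul, zero_mul]
          · apply mul_le_mul_of_nonneg_left _ (le_of_lt h0)
            apply tv_pair H hme
            apply hsupp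
            · intro hc'
              have : θp a = 0 := by rw [hθp]; simp only; rw [hc']; simp
              nlinarith [hθmnn b]
            · intro hc'
              have : θm b = 0 := by rw [hθm]; simp only; rw [hc']; simp
              nlinarith [hθpnn a]
      _ = (1 - ε) * ∑ v, |θ v| := by
          have : ∑ a, ∑ b, θp a * θm b * (2 * (1 - ε))
              = (∑ a, θp a) * (∑ b, θm b) * (2 * (1 - ε)) := by
            rw [Finset.sum_mul, Finset.sum_mul]
            apply Finset.sum_congr rfl
            intro a _
            rw [mul_comm (θp a) (∑ b, θm b), Finset.sum_mul, Finset.sum_mul]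
            apply Finset.sum_congr rfl
            intro b _
            ring
          rw [this, hcm, ← hc]
          have habssum : ∑ v, |θ v| = 2 * c := by
            rw [Finset.sum_congr rfl (fun v _ => habs v), Finset.sum_add_distrib, hcm, ← hc]
            ring
          rw [habssum]
          field_simp

end Main2

-- ## chunk 6 : decay

section Main3

variable {E : Type*} [Fintype E] [DecidableEq E] {P : E → E → ℝ} {A : ℕ → Finset E}
  {γ : ℕ} [NeZero γ] {x : E} {D : Finset (E × ZMod γ)} {ρ : ℝ} {ξ : E × ZMod γ → ℝ}
  (H : GoodSetup P A γ x D ρ ξ)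

local notation "Q" => QY P A γ
local notation "z₀" => (x, (0 : ZMod γ))
local notation "ph" => phat P A γ D ρ ξ
local notation "SP" => SamePhase P A γ x

include H

lemma inphase_supp {n s : ℕ} {u a : E × ZMod γ} (hu : 0 < kpow Q n z₀ u)
    (ha : kpow ph s u a ≠ 0) : 0 < kpow Q (n + s) z₀ a := by
  have huD : u ∈ D := mem_D_of_kpow H hu
  have h1 : kpow Q s u a ≠ 0 := by
    intro h0
    exact ha (by rw [kpow_phat_eq H huD, h0, zero_mul, zero_div])
  exact kpow_pos_trans (hQnn H) hu (lt_of_le_of_ne (kpowQ_nonneg H s u a) (Ne.symm h1))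

lemma tv_decay {K : ℕ} {ε : ℝ} (hε1 : ε ≤ 1)
    (hme : ∀ a b, SP a b → ∃ w, ε ≤ kpow ph K a w ∧ ε ≤ kpow ph K b w)
    {u v : E × ZMod γ} {n : ℕ} (hu : 0 < kpow Q n z₀ u) (hv : 0 < kpow Q n z₀ v) :
    ∀ t r, ∑ w, |kpow ph (r + t * K) u w - kpow ph (r + t * K) v w| ≤ 2 * (1 - ε) ^ t := by
  have huD : u ∈ D := mem_D_of_kpow H hu
  have hvD : v ∈ D := mem_D_of_kpow H hv
  intro t
  induction t with
  | zero =>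
    intro r
    simp only [Nat.zero_mul, Nat.add_zero, pow_zero, mul_one]
    calc ∑ w, |kpow ph r u w - kpow ph r v w|
        ≤ ∑ w, (kpow ph r u w + kpow ph r v w) := by
          apply Finset.sum_le_sum
          intro w _
          calc |kpow ph r u w - kpow ph r v w| ≤ |kpow ph r u w| + |kpow ph r v w| :=
              abs_sub _ _
            _ = kpow ph r u w + kpow ph r v w := by
              rw [abs_of_nonneg (kpow_phat_nonneg H r u w),
                abs_of_nonneg (kpow_phat_nonneg H r v w)]
      _ = 2 := by
          rw [Finset.sum_add_distrib, kpow_phat_row H huD, kpow_phat_row H hvD]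
          norm_num
  | succ t ih =>
    intro r
    have hstep : r + (t + 1) * K = (r + t * K) + K := by ring
    rw [hstep]
    set s := r + t * K with hs
    set θ : E × ZMod γ → ℝ := fun a => kpow ph s u a - kpow ph s v a with hθ
    have hrw : ∀ w, kpow ph (s + K) u w - kpow ph (s + K) v w
        = ∑ a, θ a * kpow ph K a w := by
      intro w
      rw [kpow_add, kpow_add, ← Finset.sum_sub_distrib]
      apply Finset.sum_congr rfl
      intro a _
      rw [hθ]; ring
    have hsum0 : ∑ a, θ a = 0 := by
      rw [hθ]
      simp only
      rw [Finset.sum_sub_distrib, kpow_phat_row H huD, kpow_phat_row H hvD, sub_self]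
    have hsupp : ∀ a b, θ a ≠ 0 → θ b ≠ 0 → SP a b := by
      have key : ∀ a, θ a ≠ 0 → 0 < kpow Q (n + s) z₀ a := by
        intro a ha
        have : kpow ph s u a ≠ 0 ∨ kpow ph s v a ≠ 0 := by
          by_contra hno
          push_neg at hno
          exact ha (by rw [hθ]; simp only; rw [hno.1, hno.2, sub_self])
        rcases this with h | h
        · exact inphase_supp H hu h
        · exact inphase_supp H hv h
      intro a b ha hb
      exact ⟨n + s, key a ha, key b hb⟩
    calc ∑ w, |kpow ph (s + K) u w - kpow ph (s + K) v w|
        = ∑ w, |∑ a, θ a * kpow ph K a w| :=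
          Finset.sum_congr rfl fun w _ => by rw [hrw w]
      _ ≤ (1 - ε) * ∑ a, |θ a| := tv_contract H hme θ hsum0 hsupp
      _ ≤ (1 - ε) * (2 * (1 - ε) ^ t) :=
          mul_le_mul_of_nonneg_left (ih r) (by linarith)
      _ = 2 * (1 - ε) ^ (t + 1) := by ring

lemma tv_decay_all {K : ℕ} {ε : ℝ} (hK : 0 < K) (hε1 : ε ≤ 1)
    (hme : ∀ a b, SP a b → ∃ w, ε ≤ kpow ph K a w ∧ ε ≤ kpow ph K b w)
    {u v : E × ZMod γ} {n : ℕ} (hu : 0 < kpow Q n z₀ u) (hv : 0 < kpow Q n z₀ v) (m : ℕ) :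
    ∑ w, |kpow ph m u w - kpow ph m v w| ≤ 2 * (1 - ε) ^ (m / K) := by
  have := tv_decay H hε1 hme hu hv (m / K) (m % K)
  rwa [Nat.mod_add_div' m K] at this

lemma fxi_abs_le : ∃ cf : ℝ, 0 < cf ∧ ∀ w, |fxi D ξ w| ≤ cf := by
  have hne : D.Nonempty := ⟨z₀, H.hxD⟩
  set mn := D.inf' hne ξ with hmn
  have hmnpos : 0 < mn := by
    obtain ⟨w, hw, hweq⟩ := Finset.exists_mem_eq_inf' hne ξ
    rw [hmn, hweq]; exact H.hξpos w hw
  refine ⟨mn⁻¹, by positivity, ?_⟩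
  intro w
  unfold fxi
  by_cases hw : w ∈ D
  · rw [if_pos hw, abs_of_nonneg (le_of_lt (inv_pos.2 (H.hξpos w hw)))]
    exact inv_anti₀ hmnpos (Finset.inf'_le ξ hw)
  · rw [if_neg hw, abs_zero]
    positivity

lemma nat_div_tendsto {K : ℕ} (hK : 0 < K) :
    Tendsto (fun m : ℕ => m / K) atTop atTop := by
  apply tendsto_atTop_atTop.2
  intro b
  exact ⟨b * K, fun m hm => (Nat.le_div_iff_mul_le hK).2 hm⟩

lemma gfun_diff_tendsto {u v : E × ZMod γ} {n : ℕ}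
    (hu : 0 < kpow Q n z₀ u) (hv : 0 < kpow Q n z₀ v) :
    Tendsto (fun m => gfun P A γ D ρ ξ m u - gfun P A γ D ρ ξ m v) atTop (nhds 0) := by
  obtain ⟨K, ε, hK, hε, hε12, hme⟩ := merge_uniform H
  obtain ⟨cf, hcf, hcfb⟩ := fxi_abs_le H
  apply squeeze_zero_norm' (a := fun m => cf * (2 * (1 - ε) ^ (m / K)))
  · apply Filter.Eventually.of_forall
    intro m
    have hb : ∑ w, |kpow ph m u w - kpow ph m v w| ≤ 2 * (1 - ε) ^ (m / K) :=
      tv_decay_all H hK (by linarith) hme hu hv m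
    have heq : gfun P A γ D ρ ξ m u - gfun P A γ D ρ ξ m v
        = ∑ w, (kpow ph m u w - kpow ph m v w) * fxi D ξ w := by
      unfold gfun
      rw [← Finset.sum_sub_distrib]
      apply Finset.sum_congr rfl
      intro w _
      ring
    rw [Real.norm_eq_abs, heq]
    calc |∑ w, (kpow ph m u w - kpow ph m v w) * fxi D ξ w|
        ≤ ∑ w, |(kpow ph m u w - kpow ph m v w) * fxi D ξ w| :=
          Finset.abs_sum_le_sum_abs _ _
      _ ≤ ∑ w, |kpow ph m u w - kpow ph m v w| * cf := by
          apply Finset.sum_le_sum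
          intro w _
          rw [abs_mul]
          exact mul_le_mul_of_nonneg_left (hcfb w) (abs_nonneg _)
      _ = (∑ w, |kpow ph m u w - kpow ph m v w|) * cf := by rw [Finset.sum_mul]
      _ ≤ 2 * (1 - ε) ^ (m / K) * cf :=
          mul_le_mul_of_nonneg_right hb (le_of_lt hcf)
      _ = cf * (2 * (1 - ε) ^ (m / K)) := by ring
  · have h1 : Tendsto (fun t : ℕ => (1 - ε) ^ t) atTop (nhds 0) :=
      tendsto_pow_atTop_nhds_zero_of_lt_one (by linarith) (by linarith)
    have h2 : Tendsto (fun m : ℕ => (1 - ε) ^ (m / K)) atTop (nhds 0) :=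
      h1.comp (nat_div_tendsto H hK)
    have := h2.const_mul (2 : ℝ)
    rw [mul_zero] at this
    have := this.const_mul cf
    rw [mul_zero] at this
    exact this

end Main3

-- ## chunk 7 : cylinder combinatorics

noncomputable def prefixProd {E : Type*} [DecidableEq E] (P : E → E → ℝ) (A : ℕ → Finset E)
    (q : ℕ → E) (n : ℕ) : ℝ :=
  if ∀ i ≤ n, q i ∉ A i then ∏ i ∈ Finset.range n, P (q i) (q (i + 1)) else 0

noncomputable def cylMu {E : Type*} [Fintype E] [DecidableEq E] (P : E → E → ℝ)
    (A : ℕ → Finset E) (q : ℕ → E) (n m : ℕ) (y : E) : ℝ :=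
  ∑ ω : Fin (m + 1) → E,
    if (∀ i : Fin (m + 1), (i : ℕ) ≤ n → ω i = q (i : ℕ)) ∧
        (∀ i : Fin (m + 1), ω i ∉ A (i : ℕ)) ∧ ω (Fin.last m) = y then
      ∏ i : Fin m, P (ω i.castSucc) (ω i.succ)
    else 0

noncomputable def cylProb' {E : Type*} [Fintype E] [DecidableEq E] (P : E → E → ℝ)
    (A : ℕ → Finset E) (q : ℕ → E) (n m : ℕ) : ℝ :=
  ∑ ω : Fin (m + 1) → E,
    if (∀ i : Fin (m + 1), (i : ℕ) ≤ n → ω i = q (i : ℕ)) ∧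
        (∀ i : Fin (m + 1), ω i ∉ A (i : ℕ)) then
      ∏ i : Fin m, P (ω i.castSucc) (ω i.succ)
    else 0

section Comb

variable {E : Type*} [Fintype E] [DecidableEq E] (P : E → E → ℝ) (A : ℕ → Finset E)
  (q : ℕ → E) (γ : ℕ) [NeZero γ]

lemma cylProb_eq_sum_mu (n m : ℕ) : cylProb' P A q n m = ∑ y, cylMu P A q n m y := by
  unfold cylProb' cylMu
  rw [Finset.sum_comm]
  apply Finset.sum_congr rfl
  intro ω _
  by_cases hC : (∀ i : Fin (m + 1), (i : ℕ) ≤ n → ω i = q (i : ℕ)) ∧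
      (∀ i : Fin (m + 1), ω i ∉ A (i : ℕ))
  · rw [if_pos hC]
    have hiff : ∀ y : E, ((∀ i : Fin (m + 1), (i : ℕ) ≤ n → ω i = q (i : ℕ)) ∧
        (∀ i : Fin (m + 1), ω i ∉ A (i : ℕ)) ∧ ω (Fin.last m) = y) ↔ (ω (Fin.last m) = y) :=
      fun y => ⟨fun h => h.2.2, fun h => ⟨hC.1, hC.2, h⟩⟩
    rw [Finset.sum_congr rfl (fun y _ => if_congr (hiff y) rfl rfl),
      Finset.sum_ite_eq Finset.univ (ω (Fin.last m))
      (fun _ => ∏ i : Fin m, P (ω i.castSucc) (ω i.succ)), if_pos (Finset.mem_univ _)]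
  · rw [if_neg hC]
    apply (Finset.sum_eq_zero _).symm
    intro y _
    rw [if_neg (by tauto)]

/-- The snoc-splitting equivalence. -/
def snocEquiv (E : Type*) (m : ℕ) : ((Fin (m + 1) → E) × E) ≃ (Fin (m + 2) → E) where
  toFun p := Fin.snoc p.1 p.2
  invFun ω := (Fin.init ω, ω (Fin.last (m + 1)))
  left_inv p := by simp [Fin.init_snoc, Fin.snoc_last]
  right_inv ω := by simp [Fin.snoc_init_self]

lemma cylMu_rec (n m : ℕ) (hnm : n ≤ m) (y : E) :
    cylMu P A q n (m + 1) y =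
      if y ∈ A (m + 1) then 0 else ∑ v, cylMu P A q n m v * P v y := by
  have term_eq : ∀ (ω' : Fin (m + 1) → E) (v : E),
      (if (∀ i : Fin (m + 2), (i : ℕ) ≤ n → (Fin.snoc ω' v : Fin (m + 2) → E) i = q (i : ℕ)) ∧
          (∀ i : Fin (m + 2), (Fin.snoc ω' v : Fin (m + 2) → E) i ∉ A (i : ℕ)) ∧
          (Fin.snoc ω' v : Fin (m + 2) → E) (Fin.last (m + 1)) = y then
        ∏ i : Fin (m + 1), P ((Fin.snoc ω' v : Fin (m + 2) → E) i.castSucc) ((Fin.snoc ω' v : Fin (m + 2) → E) i.succ)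
      else 0) =
      if ((∀ i : Fin (m + 1), (i : ℕ) ≤ n → ω' i = q (i : ℕ)) ∧
          (∀ i : Fin (m + 1), ω' i ∉ A (i : ℕ))) ∧ v ∉ A (m + 1) ∧ v = y then
        (∏ i : Fin m, P (ω' i.castSucc) (ω' i.succ)) * P (ω' (Fin.last m)) v
      else 0 := by
    intro ω' v
    have hprod : ∏ i : Fin (m + 1), P ((Fin.snoc ω' v : Fin (m + 2) → E) i.castSucc) ((Fin.snoc ω' v : Fin (m + 2) → E) i.succ)
        = (∏ i : Fin m, P (ω' i.castSucc) (ω' i.succ)) * P (ω' (Fin.last m)) v := by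
      rw [Fin.prod_univ_castSucc]
      congr 1
      · apply Finset.prod_congr rfl
        intro i _
        rw [Fin.succ_castSucc, Fin.snoc_castSucc, Fin.snoc_castSucc]
      · rw [Fin.succ_last, Fin.snoc_last, Fin.snoc_castSucc]
    have hcond : ((∀ i : Fin (m + 2), (i : ℕ) ≤ n → (Fin.snoc ω' v : Fin (m + 2) → E) i = q (i : ℕ)) ∧
          (∀ i : Fin (m + 2), (Fin.snoc ω' v : Fin (m + 2) → E) i ∉ A (i : ℕ)) ∧
          (Fin.snoc ω' v : Fin (m + 2) → E) (Fin.last (m + 1)) = y) ↔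
        (((∀ i : Fin (m + 1), (i : ℕ) ≤ n → ω' i = q (i : ℕ)) ∧
          (∀ i : Fin (m + 1), ω' i ∉ A (i : ℕ))) ∧ v ∉ A (m + 1) ∧ v = y) := by
      rw [Fin.snoc_last]
      constructor
      · rintro ⟨h1, h2, h3⟩
        refine ⟨⟨?_, ?_⟩, ?_, h3⟩
        · intro i hi
          have := h1 i.castSucc (by simpa using hi)
          rwa [Fin.snoc_castSucc] at this
        · intro i
          have := h2 i.castSucc
          rwa [Fin.snoc_castSucc] at this
        · have := h2 (Fin.last (m + 1))
          rwa [Fin.snoc_last, Fin.val_last] at this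
      · rintro ⟨⟨h1, h2⟩, h3, h4⟩
        refine ⟨?_, ?_, h4⟩
        · intro i hi
          induction i using Fin.lastCases with
          | last => simp only [Fin.val_last] at hi; omega
          | cast i =>
            rw [Fin.snoc_castSucc]
            exact h1 i (by simpa using hi)
        · intro i
          induction i using Fin.lastCases with
          | last => rw [Fin.snoc_last, Fin.val_last]; exact h3
          | cast i =>
            rw [Fin.snoc_castSucc]
            simpa using h2 i
    rw [if_congr hcond rfl rfl, hprod]
  unfold cylMu
  rw [← Equiv.sum_comp (snocEquiv E m)]
  simp only [snocEquiv, Equiv.coe_fn_mk]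
  rw [Fintype.sum_prod_type]
  have step1 : ∀ ω' : Fin (m + 1) → E,
      (∑ v, if (∀ i : Fin (m + 2), (i : ℕ) ≤ n → (Fin.snoc ω' v : Fin (m + 2) → E) i = q (i : ℕ)) ∧
          (∀ i : Fin (m + 2), (Fin.snoc ω' v : Fin (m + 2) → E) i ∉ A (i : ℕ)) ∧
          (Fin.snoc ω' v : Fin (m + 2) → E) (Fin.last (m + 1)) = y then
        ∏ i : Fin (m + 1), P ((Fin.snoc ω' v : Fin (m + 2) → E) i.castSucc) ((Fin.snoc ω' v : Fin (m + 2) → E) i.succ)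
      else 0) =
      if ((∀ i : Fin (m + 1), (i : ℕ) ≤ n → ω' i = q (i : ℕ)) ∧
          (∀ i : Fin (m + 1), ω' i ∉ A (i : ℕ))) ∧ y ∉ A (m + 1) then
        (∏ i : Fin m, P (ω' i.castSucc) (ω' i.succ)) * P (ω' (Fin.last m)) y
      else 0 := by
    intro ω'
    rw [Finset.sum_congr rfl (fun v _ => term_eq ω' v)]
    rw [Finset.sum_eq_single y]
    · apply if_congr _ rfl rfl
      constructor
      · rintro ⟨h1, h2, -⟩; exact ⟨h1, h2⟩
      · rintro ⟨h1, h2⟩; exact ⟨h1, h2, rfl⟩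
    · intro v _ hvy
      rw [if_neg (by tauto)]
    · intro h
      exact absurd (Finset.mem_univ y) h
  refine (Finset.sum_congr rfl (fun ω' (_ : ω' ∈ Finset.univ) => step1 ω')).trans ?_
  by_cases hy : y ∈ A (m + 1)
  · rw [if_pos hy]
    apply Finset.sum_eq_zero
    intro ω' _
    rw [if_neg (by tauto)]
  · rw [if_neg hy]
    have rhs_eq : ∀ v : E,
        (∑ ω : Fin (m + 1) → E,
          if (∀ i : Fin (m + 1), (i : ℕ) ≤ n → ω i = q (i : ℕ)) ∧
              (∀ i : Fin (m + 1), ω i ∉ A (i : ℕ)) ∧ ω (Fin.last m) = v then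
            ∏ i : Fin m, P (ω i.castSucc) (ω i.succ)
          else 0) * P v y =
        ∑ ω : Fin (m + 1) → E,
          if (∀ i : Fin (m + 1), (i : ℕ) ≤ n → ω i = q (i : ℕ)) ∧
              (∀ i : Fin (m + 1), ω i ∉ A (i : ℕ)) ∧ ω (Fin.last m) = v then
            (∏ i : Fin m, P (ω i.castSucc) (ω i.succ)) * P v y
          else 0 := by
      intro v
      rw [Finset.sum_mul]
      exact Finset.sum_congr rfl fun ω _ => by rw [ite_mul, zero_mul]
    rw [Finset.sum_congr rfl (fun v (_ : v ∈ Finset.univ) => rhs_eq v), Finset.sum_comm]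
    apply Finset.sum_congr rfl
    intro ω _
    by_cases hC : (∀ i : Fin (m + 1), (i : ℕ) ≤ n → ω i = q (i : ℕ)) ∧
        (∀ i : Fin (m + 1), ω i ∉ A (i : ℕ))
    · rw [if_pos ⟨hC, hy⟩, Finset.sum_eq_single (ω (Fin.last m))]
      · rw [if_pos ⟨hC.1, hC.2, rfl⟩]
      · intro v _ hvne
        rw [if_neg (fun h => hvne h.2.2.symm)]
      · intro h; exact absurd (Finset.mem_univ _) h
    · rw [if_neg (fun h => hC h.1), eq_comm]
      exact Finset.sum_eq_zero fun v _ => if_neg (fun h => hC ⟨h.1, h.2.1⟩)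

lemma cylMu_base (n : ℕ) (y : E) :
    cylMu P A q n n y = prefixProd P A q n * (if q n = y then 1 else 0) := by
  unfold cylMu prefixProd
  rw [Finset.sum_eq_single (fun i : Fin (n + 1) => q (i : ℕ))]
  · have hiff : ((∀ i : Fin (n + 1), (i : ℕ) ≤ n → q (i : ℕ) = q (i : ℕ)) ∧
        (∀ i : Fin (n + 1), q (i : ℕ) ∉ A (i : ℕ)) ∧ q ((Fin.last n : Fin (n+1)) : ℕ) = y) ↔
        ((∀ i ≤ n, q i ∉ A i) ∧ q n = y) := by
      rw [Fin.val_last]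
      constructor
      · rintro ⟨-, h2, h3⟩
        exact ⟨fun i hi => h2 ⟨i, by omega⟩, h3⟩
      · rintro ⟨h2, h3⟩
        exact ⟨fun _ _ => rfl, fun i => h2 (i : ℕ) (by omega), h3⟩
    rw [if_congr hiff rfl rfl]
    have hprod : (∏ i : Fin n, P (q ((i.castSucc : Fin (n+1)) : ℕ)) (q ((i.succ : Fin (n+1)) : ℕ)))
        = ∏ i ∈ Finset.range n, P (q i) (q (i + 1)) := by
      rw [← Fin.prod_univ_eq_prod_range (fun i => P (q i) (q (i + 1))) n]
      apply Finset.prod_congr rfl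
      intro i _
      rw [Fin.coe_castSucc, Fin.val_succ]
    rw [hprod]
    by_cases h1 : ∀ i ≤ n, q i ∉ A i
    · by_cases h2 : q n = y
      · rw [if_pos ⟨h1, h2⟩, if_pos h1, if_pos h2, mul_one]
      · rw [if_neg (fun h => h2 h.2), if_neg h2, mul_zero]
    · rw [if_neg (fun h => h1 h.1), if_neg h1, zero_mul]
  · intro ω _ hne
    rw [if_neg]
    rintro ⟨h1, -, -⟩
    exact hne (funext fun i => h1 i (by omega))
  · intro h; exact absurd (Finset.mem_univ _) h

lemma cylMu_eq (hper : ∀ k, A (k + γ) = A k) (n : ℕ) : ∀ m, n ≤ m → ∀ y,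
    cylMu P A q n m y = prefixProd P A q n *
      kpow (QY P A γ) (m - n) (q n, (n : ZMod γ)) (y, (m : ZMod γ)) := by
  intro m hm
  induction m, hm using Nat.le_induction with
  | base =>
    intro y
    rw [Nat.sub_self, kpow_zero, cylMu_base]
    congr 1
    apply if_congr _ rfl rfl
    simp [Prod.ext_iff]
  | succ m hm ih =>
    intro y
    rw [cylMu_rec P A q n m hm y]
    have hj : m + 1 - n = (m - n) + 1 := by omega
    rw [hj, kpow_succ]
    by_cases hy : y ∈ A (m + 1)
    · rw [if_pos hy]
      have hz : ∀ w : E × ZMod γ, QY P A γ w (y, ((m + 1 : ℕ) : ZMod γ)) = 0 := by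
        intro w
        unfold QY
        rw [if_neg]
        rintro ⟨-, h2, -⟩
        rw [ZMod.val_natCast, A_mod A γ hper] at h2
        exact h2 hy
      rw [Finset.sum_eq_zero (fun w _ => by rw [hz w, mul_zero]), mul_zero]
    · rw [if_neg hy]
      have hcollapse : ∑ w : E × ZMod γ,
          kpow (QY P A γ) (m - n) (q n, (n : ZMod γ)) w * QY P A γ w (y, ((m+1 : ℕ) : ZMod γ))
          = ∑ v : E, kpow (QY P A γ) (m - n) (q n, (n : ZMod γ)) (v, ((m : ℕ) : ZMod γ)) *
              QY P A γ (v, ((m : ℕ) : ZMod γ)) (y, ((m+1 : ℕ) : ZMod γ)) := by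
        rw [Fintype.sum_prod_type]
        apply Finset.sum_congr rfl
        intro v _
        apply Finset.sum_eq_single ((m : ℕ) : ZMod γ)
        · intro k _ hkne
          have hQ0 : QY P A γ (v, k) (y, ((m+1 : ℕ) : ZMod γ)) = 0 := by
            unfold QY
            rw [if_neg]
            rintro ⟨-, -, h3⟩
            apply hkne
            have : ((m : ZMod γ)) + 1 = k + 1 := by
              rw [← h3]; push_cast; ring
            exact (add_left_injective 1 this).symm
          rw [hQ0, mul_zero]
        · intro h; exact absurd (Finset.mem_univ _) h
      rw [hcollapse]
      rw [Finset.mul_sum]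
      apply Finset.sum_congr rfl
      intro v _
      rw [ih v, QY_apply_nat P A γ hper v y m]
      by_cases hv : v ∈ A m
      · rw [if_neg (by tauto), mul_zero, mul_zero]
        have hk0 : prefixProd P A q n *
            kpow (QY P A γ) (m - n) (q n, (n : ZMod γ)) (v, ((m : ℕ) : ZMod γ)) = 0 := by
          rcases Nat.lt_or_ge n m with hlt | hge
          · have : kpow (QY P A γ) (m - n) (q n, (n : ZMod γ)) (v, ((m : ℕ) : ZMod γ)) = 0 := by
              apply QY_boundary P A γ (b := (v, ((m : ℕ) : ZMod γ))) _ _ (by omega)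
              show v ∈ A (((m : ℕ) : ZMod γ)).val
              rwa [ZMod.val_natCast, A_mod A γ hper]
            rw [this, mul_zero]
          · have hnm' : n = m := le_antisymm hm hge
            subst hnm'
            rw [Nat.sub_self, kpow_zero]
            by_cases hqv : (q n, (n : ZMod γ)) = (v, ((n : ℕ) : ZMod γ))
            · have hqv' : q n = v := (Prod.ext_iff.1 hqv).1
              have : ¬ ∀ i ≤ n, q i ∉ A i := fun h => (h n le_rfl) (by rwa [hqv'])
              unfold prefixProd
              rw [if_neg this, zero_mul]
            · rw [if_neg hqv, mul_zero]
        rw [hk0, zero_mul]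
      · rw [if_pos ⟨hv, hy⟩]
        ring

lemma cylProb_eq (hper : ∀ k, A (k + γ) = A k) {n m : ℕ} (hm : n ≤ m) :
    cylProb' P A q n m = prefixProd P A q n *
      ∑ w : E × ZMod γ, kpow (QY P A γ) (m - n) (q n, (n : ZMod γ)) w := by
  rw [cylProb_eq_sum_mu, Finset.mul_sum]
  have hzero : ∀ w : E × ZMod γ, w.2 ≠ ((m : ℕ) : ZMod γ) →
      kpow (QY P A γ) (m - n) (q n, (n : ZMod γ)) w = 0 := by
    intro w hw
    by_contra h0
    apply hw
    have := kpow_QY_time P A γ h0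
    rw [this]
    show ((n : ZMod γ)) + ((m - n : ℕ) : ZMod γ) = ((m : ℕ) : ZMod γ)
    rw [← Nat.cast_add]
    congr 1
    omega
  calc ∑ y, cylMu P A q n m y
      = ∑ y, prefixProd P A q n *
          kpow (QY P A γ) (m - n) (q n, (n : ZMod γ)) (y, (m : ZMod γ)) :=
        Finset.sum_congr rfl fun y _ => cylMu_eq P A q γ hper n m hm y
    _ = ∑ w : E × ZMod γ, prefixProd P A q n *
          kpow (QY P A γ) (m - n) (q n, (n : ZMod γ)) w := by
        rw [Fintype.sum_prod_type]
        apply Finset.sum_congr rfl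
        intro v _
        rw [Finset.sum_eq_single ((m : ℕ) : ZMod γ)]
        · intro k _ hkne
          rw [hzero (v, k) hkne, mul_zero]
        · intro h; exact absurd (Finset.mem_univ _) h

end Comb

-- ## chunk 8 : path lemma

section Path

variable {E : Type*} [Fintype E] [DecidableEq E] {P : E → E → ℝ} {A : ℕ → Finset E}
  {γ : ℕ} [NeZero γ] {x : E} {D : Finset (E × ZMod γ)} {ρ : ℝ} {ξ : E × ZMod γ → ℝ}
  (H : GoodSetup P A γ x D ρ ξ)

local notation "Q" => QY P A γ
local notation "z₀" => (x, (0 : ZMod γ))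

include H

lemma path_pos {q : ℕ → E} (hq0 : q 0 = x) {n : ℕ} (hcond : ∀ i ≤ n, q i ∉ A i)
    (hP : ∀ i, i < n → P (q i) (q (i + 1)) ≠ 0) :
    ∀ i, i ≤ n → 0 < kpow Q i z₀ (q i, (i : ZMod γ)) := by
  intro i
  induction i with
  | zero =>
    intro _
    rw [hq0, Nat.cast_zero, kpow_zero, if_pos rfl]
    norm_num
  | succ i ih =>
    intro hi
    have h1 : 0 < kpow Q i z₀ (q i, (i : ZMod γ)) := ih (by omega)
    have hQ : 0 < Q (q i, (i : ZMod γ)) (q (i + 1), ((i + 1 : ℕ) : ZMod γ)) := by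
      rw [QY_apply_nat P A γ H.hper, if_pos ⟨hcond i (by omega), hcond (i + 1) hi⟩]
      exact lt_of_le_of_ne (H.hPnn _ _) (Ne.symm (hP i (by omega)))
    exact kpow_step_pos (hQnn H) h1 hQ

end Path


end AUX

/-- `cylProb P A q n m = P_{q 0}(X_1 = q 1, …, X_n = q n, τ > m)` (for `m ≥ n`), where
`τ = inf {k | X_k ∈ A k}`, written as a sum over all paths of length `m`. -/
noncomputable def cylProb [Fintype E] [DecidableEq E] (P : E → E → ℝ) (A : ℕ → Finset E)
    (q : ℕ → E) (n m : ℕ) : ℝ :=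
  ∑ ω : Fin (m + 1) → E,
    if (∀ i : Fin (m + 1), (i : ℕ) ≤ n → ω i = q (i : ℕ)) ∧
        (∀ i : Fin (m + 1), ω i ∉ A (i : ℕ)) then
      ∏ i : Fin m, P (ω i.castSucc) (ω i.succ)
    else 0

/-- The value `E_x[1_{X_1 = q 1, …, X_n = q n} 1_{τ > n} ξ(X_n, n̄)] / (ρ^n ξ(x, 0̄))`
of the `Q`-process on the cylinder determined by `q` up to time `n` (here `x = q 0`). -/
noncomputable def qProcessCyl [DecidableEq E] (P : E → E → ℝ) (A : ℕ → Finset E) (γ : ℕ)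
    (ρ : ℝ) (ξ : E × ZMod γ → ℝ) (q : ℕ → E) (n : ℕ) : ℝ :=
  (if ∀ i ≤ n, q i ∉ A i then ∏ i ∈ Finset.range n, P (q i) (q (i + 1)) else 0) *
      ξ (q n, (n : ZMod γ)) / (ρ ^ n * ξ (q 0, (0 : ZMod γ)))

/-- Existence of the `Q`-process with a `γ`-periodically moving boundary: for every cylinder,
`P_x(X_1 = q 1, …, X_n = q n | τ > m)` converges as `m → ∞` to
`E_x[1_{X_1 = q 1, …, X_n = q n} 1_{τ > n} ξ(X_n, n̄)] / (ρ^n ξ(x, 0̄))`, and under the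
limiting law `ℚ_x` the process is a time-inhomogeneous Markov chain with transition
probabilities `ℚ_x(X_n = z | X_{n-1} = y) = ξ(z, n̄) P_y(X_1 = z) / (ρ ξ(y, n-1̄))` for
`y ∈ E_{n-1}`, `z ∈ E_n`.  Here `ρ` is the spectral radius and `ξ` a positive right Perron
eigenvector of the communicating class `D` of `(x, 0̄)` for the space-time chain
`Y_n = (X_n, n mod γ)` killed on `∂`, and every state reachable from `(x, 0̄)` before
absorption lies in `D`. -/
theorem q_process_moving_boundary [Fintype E] [DecidableEq E]
    (P : E → E → ℝ) (hPnn : ∀ x y, 0 ≤ P x y) (hPsum : ∀ x, ∑ y, P x y = 1)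
    (γ : ℕ) [NeZero γ] (hγ : 2 ≤ γ)
    (A : ℕ → Finset E) (hper : ∀ n : ℕ, A (n + γ) = A n)
    (habs : ∀ x ∉ A 0, Tendsto (fun n => ∑ y, mdist P A (dirac x) n y) atTop (nhds 0))
    (hirr : ∀ n : ℕ, ∀ x ∉ A n, ∀ y ∉ A n,
      ∃ m : ℕ, 0 < mdist P (fun _ => A n) (dirac x) m y)
    (x : E) (hx : x ∉ A 0)
    (D : Finset (E × ZMod γ)) (hxD : (x, (0 : ZMod γ)) ∈ D)
    (hcomm : ∀ z ∈ D, (∃ n, 0 < kpow (QY P A γ) n (x, (0 : ZMod γ)) z) ∧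
      ∃ m, 0 < kpow (QY P A γ) m z (x, (0 : ZMod γ)))
    (hreach : ∀ z, (∃ n, 0 < kpow (QY P A γ) n (x, (0 : ZMod γ)) z) → z ∈ D)
    (ρ : ℝ) (hρ : 0 < ρ)
    (ξ : E × ZMod γ → ℝ) (hξpos : ∀ z ∈ D, 0 < ξ z)
    (hξeig : ∀ z ∈ D, ∑ w ∈ D, QY P A γ z w * ξ w = ρ * ξ z)
    (q : ℕ → E) (hq0 : q 0 = x) :
    (∀ n : ℕ,
      Tendsto (fun m : ℕ => cylProb P A q n m / cylProb P A q 0 m) atTop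
        (nhds (qProcessCyl P A γ ρ ξ q n))) ∧
    (∀ n : ℕ, q n ∉ A n → q (n + 1) ∉ A (n + 1) →
      qProcessCyl P A γ ρ ξ q (n + 1) =
        qProcessCyl P A γ ρ ξ q n *
          (ξ (q (n + 1), ((n + 1 : ℕ) : ZMod γ)) * P (q n) (q (n + 1))) /
            (ρ * ξ (q n, (n : ZMod γ)))) := by
  have H : GoodSetup P A γ x D ρ ξ := ⟨hPnn, hper, hxD, hcomm, hreach, hρ, hξpos, hξeig⟩
  have hqe : ∀ k : ℕ, qProcessCyl P A γ ρ ξ q k =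
      prefixProd P A q k * ξ (q k, (k : ZMod γ)) / (ρ ^ k * ξ (q 0, (0 : ZMod γ))) :=
    fun k => rfl
  have hcyl : ∀ n m : ℕ, cylProb P A q n m = cylProb' P A q n m := fun n m => rfl
  have hρ0 : ρ ≠ 0 := ne_of_gt hρ
  constructor
  · -- Part 1: convergence of conditioned cylinder probabilities
    intro n
    by_cases hpre : prefixProd P A q n = 0
    · -- degenerate cylinder
      have hqc : qProcessCyl P A γ ρ ξ q n = 0 := by
        rw [hqe, hpre, zero_mul, zero_div]
      rw [hqc]
      apply Tendsto.congr' _ (tendsto_const_nhds : Tendsto (fun _ : ℕ => (0:ℝ)) atTop (nhds 0))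
      filter_upwards [eventually_ge_atTop n] with m hm
      rw [hcyl, cylProb_eq P A q γ hper hm, hpre, zero_mul, zero_div]
    · -- nondegenerate cylinder
      have hcond : ∀ i ≤ n, q i ∉ A i := by
        by_contra hc
        exact hpre (by unfold prefixProd; rw [if_neg hc])
      have hprod : (∏ i ∈ Finset.range n, P (q i) (q (i + 1))) ≠ 0 := by
        intro h0
        exact hpre (by unfold prefixProd; rw [if_pos hcond, h0])
      have hPne : ∀ i, i < n → P (q i) (q (i + 1)) ≠ 0 := by
        intro i hi
        exact Finset.prod_ne_zero_iff.1 hprod i (Finset.mem_range.2 hi)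
      have hznPos : 0 < kpow (QY P A γ) n (x, (0 : ZMod γ)) (q n, (n : ZMod γ)) :=
        path_pos H hq0 hcond hPne n le_rfl
      have hznD : (q n, (n : ZMod γ)) ∈ D := mem_D_of_kpow H hznPos
      have hz0Pos : 0 < kpow (QY P A γ) 0 (x, (0 : ZMod γ)) (x, (0 : ZMod γ)) := by
        rw [kpow_zero, if_pos rfl]; norm_num
      obtain ⟨c₁, c₂, hc₁, hc₂, hbounds⟩ := gfun_bounds H
      have hH : ∀ m, c₁ ≤ gfun P A γ D ρ ξ m (x, (0 : ZMod γ)) :=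
        fun m => (hbounds m _ hxD).1
      have hHne : ∀ m, gfun P A γ D ρ ξ m (x, (0 : ZMod γ)) ≠ 0 :=
        fun m => ne_of_gt (lt_of_lt_of_le hc₁ (hH m))
      -- each summand tends to 0
      have hdiffw : ∀ w : E × ZMod γ,
          Tendsto (fun m => kpow (phat P A γ D ρ ξ) n (x, (0 : ZMod γ)) w *
            (gfun P A γ D ρ ξ (m - n) w - gfun P A γ D ρ ξ (m - n) (q n, (n : ZMod γ))))
            atTop (nhds 0) := by
        intro w
        by_cases hw : kpow (phat P A γ D ρ ξ) n (x, (0 : ZMod γ)) w = 0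
        · simp only [hw, zero_mul]
          exact tendsto_const_nhds
        · have hwQ : 0 < kpow (QY P A γ) n (x, (0 : ZMod γ)) w := by
            have h1 : kpow (QY P A γ) n (x, (0 : ZMod γ)) w ≠ 0 := by
              intro h0
              exact hw (by rw [kpow_phat_eq H hxD, h0, zero_mul, zero_div])
            exact lt_of_le_of_ne (kpowQ_nonneg H n _ w) (Ne.symm h1)
          have h2 : Tendsto (fun j => gfun P A γ D ρ ξ j w -
              gfun P A γ D ρ ξ j (q n, (n : ZMod γ))) atTop (nhds 0) :=
            gfun_diff_tendsto H hwQ hznPos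
          have h3 := h2.comp (tendsto_sub_atTop_nat n)
          have h4 := h3.const_mul (kpow (phat P A γ D ρ ξ) n (x, (0 : ZMod γ)) w)
          rw [mul_zero] at h4
          exact h4
      have hsumT : Tendsto (fun m => ∑ w, kpow (phat P A γ D ρ ξ) n (x, (0 : ZMod γ)) w *
          (gfun P A γ D ρ ξ (m - n) w - gfun P A γ D ρ ξ (m - n) (q n, (n : ZMod γ))))
          atTop (nhds 0) := by
        have := tendsto_finset_sum Finset.univ (fun w (_ : w ∈ Finset.univ) => hdiffw w)
        rwa [Finset.sum_const_zero] at this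
      have hHG : ∀ m, n ≤ m → gfun P A γ D ρ ξ m (x, (0 : ZMod γ)) -
          gfun P A γ D ρ ξ (m - n) (q n, (n : ZMod γ)) =
          ∑ w, kpow (phat P A γ D ρ ξ) n (x, (0 : ZMod γ)) w *
            (gfun P A γ D ρ ξ (m - n) w - gfun P A γ D ρ ξ (m - n) (q n, (n : ZMod γ))) := by
        intro m hm
        have e1 : gfun P A γ D ρ ξ m (x, (0 : ZMod γ)) =
            ∑ w, kpow (phat P A γ D ρ ξ) n (x, (0 : ZMod γ)) w *
              gfun P A γ D ρ ξ (m - n) w := by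
          have := gfun_split H n (m - n) (x, (0 : ZMod γ))
          rwa [show n + (m - n) = m from by omega] at this
        calc gfun P A γ D ρ ξ m (x, (0 : ZMod γ)) -
            gfun P A γ D ρ ξ (m - n) (q n, (n : ZMod γ))
            = (∑ w, kpow (phat P A γ D ρ ξ) n (x, (0 : ZMod γ)) w *
                gfun P A γ D ρ ξ (m - n) w) -
              (∑ w, kpow (phat P A γ D ρ ξ) n (x, (0 : ZMod γ)) w) *
                gfun P A γ D ρ ξ (m - n) (q n, (n : ZMod γ)) := by
              rw [← e1, kpow_phat_row H hxD, one_mul]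
          _ = ∑ w, kpow (phat P A γ D ρ ξ) n (x, (0 : ZMod γ)) w *
                (gfun P A γ D ρ ξ (m - n) w -
                  gfun P A γ D ρ ξ (m - n) (q n, (n : ZMod γ))) := by
              rw [Finset.sum_mul, ← Finset.sum_sub_distrib]
              exact Finset.sum_congr rfl fun w _ => by ring
      have hGH0 : Tendsto (fun m => gfun P A γ D ρ ξ m (x, (0 : ZMod γ)) -
          gfun P A γ D ρ ξ (m - n) (q n, (n : ZMod γ))) atTop (nhds 0) := by
        apply Tendsto.congr' _ hsumT
        filter_upwards [eventually_ge_atTop n] with m hm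
        exact (hHG m hm).symm
      -- ratio of g tends to 1
      have hgr : Tendsto (fun m => gfun P A γ D ρ ξ (m - n) (q n, (n : ZMod γ)) /
          gfun P A γ D ρ ξ m (x, (0 : ZMod γ))) atTop (nhds 1) := by
        rw [← tendsto_sub_nhds_zero_iff]
        apply squeeze_zero_norm' (a := fun m =>
          |gfun P A γ D ρ ξ m (x, (0 : ZMod γ)) -
            gfun P A γ D ρ ξ (m - n) (q n, (n : ZMod γ))| * c₁⁻¹)
        · apply Filter.Eventually.of_forall
          intro m
          set Hm := gfun P A γ D ρ ξ m (x, (0 : ZMod γ)) with hHm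
          set Gm := gfun P A γ D ρ ξ (m - n) (q n, (n : ZMod γ)) with hGm
          have hHmpos : 0 < Hm := lt_of_lt_of_le hc₁ (hH m)
          have : Gm / Hm - 1 = (Gm - Hm) / Hm := by field_simp
          rw [Real.norm_eq_abs, this, abs_div, abs_of_pos hHmpos]
          rw [abs_sub_comm Gm Hm, div_eq_mul_inv]
          apply mul_le_mul_of_nonneg_left _ (abs_nonneg _)
          exact inv_anti₀ hc₁ (hH m)
        · have := hGH0.abs.mul_const c₁⁻¹
          rwa [abs_zero, zero_mul] at this
      -- identify the limit
      set L := prefixProd P A q n * ξ (q n, (n : ZMod γ)) /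
        (ρ ^ n * ξ (x, (0 : ZMod γ))) with hL
      have hfin : Tendsto (fun m => L * (gfun P A γ D ρ ξ (m - n) (q n, (n : ZMod γ)) /
          gfun P A γ D ρ ξ m (x, (0 : ZMod γ)))) atTop (nhds L) := by
        have := hgr.const_mul L
        rwa [mul_one] at this
      have hqcL : qProcessCyl P A γ ρ ξ q n = L := by
        rw [hqe, hL, hq0]
      rw [hqcL]
      apply Tendsto.congr' _ hfin
      filter_upwards [eventually_ge_atTop n] with m hm
      have hd : cylProb P A q 0 m = prefixProd P A q 0 *
          ∑ w, kpow (QY P A γ) m (q 0, ((0 : ℕ) : ZMod γ)) w := by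
        rw [hcyl, cylProb_eq P A q γ hper (Nat.zero_le m), Nat.sub_zero]
      have hpre0 : prefixProd P A q 0 = 1 := by
        unfold prefixProd
        rw [if_pos, Finset.range_zero, Finset.prod_empty]
        intro i hi
        have : i = 0 := by omega
        rw [this, hq0]
        exact hx
      have hnum : cylProb P A q n m = prefixProd P A q n *
          (ρ ^ (m - n) * ξ (q n, (n : ZMod γ)) *
            gfun P A γ D ρ ξ (m - n) (q n, (n : ZMod γ))) := by
        rw [hcyl, cylProb_eq P A q γ hper hm, Fsum_eq H hznD]
      have hden : cylProb P A q 0 m = ρ ^ m * ξ (x, (0 : ZMod γ)) *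
          gfun P A γ D ρ ξ m (x, (0 : ZMod γ)) := by
        rw [hd, hpre0, one_mul, hq0, Nat.cast_zero, Fsum_eq H hxD]
      rw [hnum, hden, hL]
      have hξ0 : ξ (x, (0 : ZMod γ)) ≠ 0 := ne_of_gt (hξpos _ hxD)
      have hρm : (ρ : ℝ) ^ m ≠ 0 := pow_ne_zero m hρ0
      have hρn : (ρ : ℝ) ^ n ≠ 0 := pow_ne_zero n hρ0
      rw [pow_sub₀ ρ hρ0 hm]
      have hcan : ρ ^ m * ρ⁻¹ ^ m = 1 := by
        rw [← mul_pow, mul_inv_cancel₀ hρ0, one_pow]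
      field_simp
  · -- Part 2: Markov property of the Q-process
    intro n hn hn1
    by_cases hall : ∀ i ≤ n + 1, q i ∉ A i
    · have halln : ∀ i ≤ n, q i ∉ A i := fun i hi => hall i (by omega)
      by_cases hP0 : ∃ i, i < n + 1 ∧ P (q i) (q (i + 1)) = 0
      · obtain ⟨i, hi, hPi⟩ := hP0
        have hL0 : prefixProd P A q (n + 1) = 0 := by
          unfold prefixProd
          rw [if_pos hall]
          exact Finset.prod_eq_zero (Finset.mem_range.2 hi) hPi
        rw [hqe, hL0, zero_mul, zero_div]
        rcases Nat.lt_succ_iff_lt_or_eq.1 hi with hi' | rfl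
        · have h0 : prefixProd P A q n = 0 := by
            unfold prefixProd
            rw [if_pos halln]
            exact Finset.prod_eq_zero (Finset.mem_range.2 hi') hPi
          rw [hqe, h0, zero_mul, zero_div, zero_mul, zero_div]
        · rw [hPi, mul_zero, mul_zero, zero_div]
      · push_neg at hP0
        have hPne : ∀ i, i < n + 1 → P (q i) (q (i + 1)) ≠ 0 := hP0
        have hpathD : ∀ i, i ≤ n + 1 → (q i, (i : ZMod γ)) ∈ D := fun i hi =>
          mem_D_of_kpow H (path_pos H hq0 hall hPne i hi)
        have hξn : ξ (q n, (n : ZMod γ)) ≠ 0 :=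
          ne_of_gt (hξpos _ (hpathD n (by omega)))
        have hξ0 : ξ (q 0, ((0 : ℕ) : ZMod γ)) ≠ 0 := by
          rw [Nat.cast_zero]
          exact ne_of_gt (hξpos _ (by rw [hq0]; exact hxD))
        rw [hqe, hqe]
        unfold prefixProd
        rw [if_pos hall, if_pos halln, Finset.prod_range_succ]
        rw [show ξ (q 0, ((0 : ℕ) : ZMod γ)) = ξ (q 0, (0 : ZMod γ)) by rw [Nat.cast_zero]] at hξ0
        field_simp
        ring
    · have hL0 : prefixProd P A q (n + 1) = 0 := by
        unfold prefixProd; rw [if_neg hall]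
      have hn0 : prefixProd P A q n = 0 := by
        unfold prefixProd
        rw [if_neg]
        intro hc
        apply hall
        intro i hi
        rcases Nat.lt_succ_iff_lt_or_eq.1 (Nat.lt_succ_of_le hi) with h | h
        · exact hc i (by omega)
        · rw [h]; exact hn1
      rw [hqe, hqe, hL0, hn0, zero_mul, zero_div, zero_mul, zero_div, zero_mul, zero_div]
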